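/- Let V be a finite-dimensional real inner product space, S ⊆ V a finite set of unit vectors achieved as −Proj_{F} f*/‖Proj_F f*‖ over subspaces F spanned by faces of a polyhedral cone σ, and suppose a linear functional f takes a negative value on σ. If s is the unique point of the unit sphere intersected with σ at which f attains its minimum, and s lies in the relative interior of a face F of σ, then s = −Proj_{span F} f* / ‖Proj_{span F} f*‖. -/

import Mathlib

open RealInnerProductSpace

set_option maxHeartbeats 800000 in
/-- Let `σ` be a polyhedral cone cut out by finitely many linear functionals, and let
`f` be a linear functional (with Riesz representative `f*`) taking a negative value on
`σ`. If `s` is the minimizer of `f` on the unit sphere intersected with `σ`, and `s`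
lies in the relative interior of a face `F` of `σ`, then
`s = -Proj_{span F} f* / ‖Proj_{span F} f*‖`. -/
theorem min_point_eq_neg_normalized_proj_of_mem_relint_face
    {V : Type*} [NormedAddCommGroup V] [InnerProductSpace ℝ V] [FiniteDimensional ℝ V]
    {ι : Type*} [Fintype ι] (g : ι → V →L[ℝ] ℝ)
    (σ : Set V) (hσ : σ = {v | ∀ i, 0 ≤ g i v})
    (f : V →L[ℝ] ℝ) (fstar : V) (hfstar : ∀ x : V, f x = ⟪x, fstar⟫)
    (hneg : ∃ x ∈ σ, f x < 0)
    (s : V) (hsσ : s ∈ σ) (hnorm : ‖s‖ = 1)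
    (hmin : ∀ y ∈ σ, ‖y‖ = 1 → f s ≤ f y)
    (F : Set V) (h : V →L[ℝ] ℝ) (hsupp : ∀ v ∈ σ, 0 ≤ h v)
    (hF : F = σ ∩ {v | h v = 0})
    (hsF : s ∈ F)
    (hrelint : ∃ ε : ℝ, 0 < ε ∧ ∀ y ∈ Submodule.span ℝ F, ‖y - s‖ < ε → y ∈ F) :
    (Submodule.orthogonalProjection (Submodule.span ℝ F) fstar : V) ≠ 0 ∧
      s = (-‖(Submodule.orthogonalProjection (Submodule.span ℝ F) fstar : V)‖⁻¹) •
            (Submodule.orthogonalProjection (Submodule.span ℝ F) fstar : V) := by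
  set W := Submodule.span ℝ F with hW
  set p : V := (Submodule.orthogonalProjection W fstar : V) with hp
  have hsW : s ∈ W := Submodule.subset_span hsF
  have hFσ : F ⊆ σ := by rw [hF]; exact Set.inter_subset_left
  have hpW : p ∈ W := (Submodule.orthogonalProjection W fstar).2
  -- on W, f agrees with inner with p
  have hinner : ∀ y ∈ W, f y = ⟪y, p⟫ := by
    intro y hy
    have hperp : ⟪y, fstar - p⟫ = 0 :=
      (Submodule.sub_starProjection_mem_orthogonal (K := W) fstar) y hy
    rw [inner_sub_right] at hperp
    rw [hfstar]; linarith
  -- f s < 0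
  have hfs_neg : f s < 0 := by
    obtain ⟨x, hxσ, hfx⟩ := hneg
    have hx0 : x ≠ 0 := by rintro rfl; simp at hfx
    have hxn : 0 < ‖x‖ := norm_pos_iff.2 hx0
    have hyσ : ‖x‖⁻¹ • x ∈ σ := by
      rw [hσ] at hxσ ⊢
      intro i
      have h1 := hxσ i
      have h2 : g i (‖x‖⁻¹ • x) = ‖x‖⁻¹ * g i x := by simp
      rw [h2]
      exact mul_nonneg (inv_nonneg.2 hxn.le) h1
    have hyn : ‖‖x‖⁻¹ • x‖ = 1 := by
      rw [norm_smul, Real.norm_eq_abs, abs_of_pos (inv_pos.2 hxn), inv_mul_cancel₀ hxn.ne']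
    have hle := hmin _ hyσ hyn
    have h3 : f (‖x‖⁻¹ • x) = ‖x‖⁻¹ * f x := by simp
    rw [h3] at hle
    have : ‖x‖⁻¹ * f x < 0 := mul_neg_of_pos_of_neg (inv_pos.2 hxn) hfx
    linarith
  have hsp : ⟪s, p⟫ < 0 := by rw [← hinner s hsW]; exact hfs_neg
  have hpne : p ≠ 0 := by
    rintro h0
    rw [h0, inner_zero_right] at hsp
    exact lt_irrefl 0 hsp
  refine ⟨hpne, ?_⟩
  set np : ℝ := ‖p‖ with hnp
  have hnp0 : 0 < np := norm_pos_iff.2 hpne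
  set u : V := (-np⁻¹) • p with hu
  have hun : ‖u‖ = 1 := by
    rw [hu, norm_smul, norm_neg, norm_inv, norm_norm]
    exact inv_mul_cancel₀ hnp0.ne'
  set a : ℝ := ⟪s, u⟫ with ha
  have hsu : a = -np⁻¹ * ⟪s, p⟫ := by rw [ha, hu, real_inner_smul_right]
  have hspa : ⟪s, p⟫ = -a * np := by
    rw [hsu]; field_simp
  have ha0 : 0 < a := by
    rw [hsu]
    exact mul_pos_of_neg_of_neg (by simp [hnp0]) hsp
  have ha1 : a ≤ 1 := by
    calc a ≤ |a| := le_abs_self a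
    _ ≤ ‖s‖ * ‖u‖ := abs_real_inner_le_norm s u
    _ = 1 := by rw [hnorm, hun, one_mul]
  rcases eq_or_lt_of_le ha1 with heq | hlt
  · exact (inner_eq_one_iff_of_norm_eq_one hnorm hun).1 heq
  exfalso
  obtain ⟨ε, hε0, hε⟩ := hrelint
  set t : ℝ := min (ε / 5) (1 / 4) with htdef
  have ht0 : 0 < t := lt_min (by linarith) (by norm_num)
  have ht4 : t ≤ 1 / 4 := min_le_right _ _
  have htε : 4 * t < ε := by
    have h5 : t ≤ ε / 5 := min_le_left _ _
    linarith
  set z : V := s + t • (u - s) with hz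
  have huW : u ∈ W := Submodule.smul_mem _ _ hpW
  have hzW : z ∈ W := Submodule.add_mem _ hsW
    (Submodule.smul_mem _ _ (Submodule.sub_mem _ huW hsW))
  have hzs : ‖z - s‖ ≤ 2 * t := by
    have h6 : z - s = t • (u - s) := by rw [hz]; abel
    rw [h6, norm_smul, Real.norm_eq_abs, abs_of_pos ht0]
    have h7 : ‖u - s‖ ≤ 2 := by
      calc ‖u - s‖ ≤ ‖u‖ + ‖s‖ := norm_sub_le u s
      _ = 2 := by rw [hun, hnorm]; norm_num
    nlinarith
  set nz : ℝ := ‖z‖ with hnzdef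
  have hnz0 : 0 < nz := by
    have h8 : ‖s‖ - ‖z‖ ≤ ‖s - z‖ := norm_sub_norm_le s z
    rw [norm_sub_rev] at h8
    rw [hnorm] at h8
    have : nz ≥ 1 - 2 * t := by rw [hnzdef]; linarith
    linarith
  -- norm of z squared
  have hzsq : nz ^ 2 = 1 + 2 * t * (a - 1) + t ^ 2 * (2 - 2 * a) := by
    have e1 : nz ^ 2 = ‖s‖ ^ 2 + 2 * ⟪s, t • (u - s)⟫ + ‖t • (u - s)‖ ^ 2 := by
      rw [hnzdef, hz]; exact norm_add_sq_real s (t • (u - s))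
    have e2 : ⟪s, t • (u - s)⟫ = t * (a - 1) := by
      rw [real_inner_smul_right, inner_sub_right, ← ha, real_inner_self_eq_norm_sq, hnorm]
      ring
    have e3 : ‖t • (u - s)‖ ^ 2 = t ^ 2 * (2 - 2 * a) := by
      rw [norm_smul, mul_pow, Real.norm_eq_abs, sq_abs]
      have e4 : ‖u - s‖ ^ 2 = 2 - 2 * a := by
        rw [norm_sub_sq_real, hun, hnorm, real_inner_comm, ← ha]
        ring
      rw [e4]
    rw [e1, e2, e3, hnorm]; ring
  -- key inequality
  have hkey2 : (a * nz) ^ 2 < (a + t * (1 - a)) ^ 2 := by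
    have : (a * nz) ^ 2 = a ^ 2 * nz ^ 2 := by ring
    rw [this, hzsq]
    have hfac : (a + t * (1 - a)) ^ 2 - a ^ 2 * (1 + 2 * t * (a - 1) + t ^ 2 * (2 - 2 * a))
        = t * (1 - a) * (1 + a) * (2 * a + t * (1 - 2 * a)) := by ring
    have hpos : 0 < 2 * a + t * (1 - 2 * a) := by
      nlinarith [mul_pos ha0 (show (0:ℝ) < 1 - t by linarith)]
    have hprod := mul_pos (mul_pos (mul_pos ht0 (sub_pos.2 hlt))
      (show (0:ℝ) < 1 + a by linarith)) hpos
    linarith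
  have hkey : a * nz < a + t * (1 - a) := by
    refine lt_of_pow_lt_pow_left₀ 2 ?_ hkey2
    nlinarith
  -- the perturbed point
  set y : V := nz⁻¹ • z with hy
  have hyW : y ∈ W := Submodule.smul_mem _ _ hzW
  have hyn : ‖y‖ = 1 := by
    rw [hy, norm_smul, norm_inv, norm_norm, ← hnzdef, inv_mul_cancel₀ hnz0.ne']
  have hyz : ‖y - z‖ ≤ 2 * t := by
    have e5 : y - z = (nz⁻¹ - 1) • z := by rw [hy, sub_smul, one_smul]
    rw [e5, norm_smul, Real.norm_eq_abs, ← hnzdef]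
    have e6 : |nz⁻¹ - 1| * nz = |1 - nz| := by
      rw [← abs_of_pos hnz0, ← abs_mul]
      have : (nz⁻¹ - 1) * nz = 1 - nz := by field_simp
      rw [abs_of_pos hnz0, this]
    rw [e6]
    have e7 : |1 - nz| ≤ ‖z - s‖ := by
      have := abs_norm_sub_norm_le s z
      rw [hnorm, norm_sub_rev] at this
      rw [hnzdef]
      convert this using 2
    linarith
  have hys : ‖y - s‖ < ε := by
    have : ‖y - s‖ ≤ ‖y - z‖ + ‖z - s‖ := norm_sub_le_norm_sub_add_norm_sub y z s
    linarith
  have hyF : y ∈ F := hε y hyW hys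
  have hle := hmin y (hFσ hyF) hyn
  -- compute f y and f s
  have hup : ⟪u, p⟫ = -np := by
    rw [hu, real_inner_smul_left, real_inner_self_eq_norm_sq, ← hnp]
    field_simp
  have hzp : ⟪z, p⟫ = -np * (a + t * (1 - a)) := by
    rw [hz, inner_add_left, real_inner_smul_left, inner_sub_left, hspa, hup]
    ring
  have hfy : f y = nz⁻¹ * (-np * (a + t * (1 - a))) := by
    rw [hinner y hyW, hy, real_inner_smul_left, hzp]
  have hfs : f s = -a * np := by rw [hinner s hsW, hspa]
  rw [hfy, hfs] at hle
  -- contradiction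
  have h9 : np * (a * nz) < np * (a + t * (1 - a)) := mul_lt_mul_of_pos_left hkey hnp0
  have h10 := mul_lt_mul_of_pos_right h9 (inv_pos.2 hnz0)
  have h11 : np * (a * nz) * nz⁻¹ = np * a := by field_simp
  rw [h11] at h10
  nlinarith [h10]
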